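/- Let Z be a nonempty finite metric space. Then the function X ↦ d_GH(Z,X) on finite metric spaces is extremely fragile: there is a constant k = 1 such that for every nonempty finite metric space X and every N > 0 there is a metric space X' containing X isometrically with |X'| = |X| + 1 and |d_GH(Z,X') - d_GH(Z,X)| > N. -/

import Mathlib

open Metric EMetric Set

/-- Auxiliary metric on `Option X`: adjoin one point at distance `a` from everything. -/
def optDist (X : Type) [MetricSpace X] (a : ℝ) : Option X → Option X → ℝ
  | some x, some y => dist x y
  | none, none => 0
  | _, _ => a

def optMetric (X : Type) [MetricSpace X] (a : ℝ) (ha : 0 < a)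
    (hd : ∀ x y : X, dist x y ≤ 2 * a) : MetricSpace (Option X) where
  dist := optDist X a
  dist_self p := by cases p <;> simp [optDist]
  dist_comm p q := by cases p <;> cases q <;> simp [optDist, dist_comm]
  dist_triangle p q r := by
    cases p <;> cases q <;> cases r <;>
      simp only [optDist] <;>
      first
        | positivity
        | linarith [dist_nonneg (x := ‹X›) (y := ‹X›), ha.le]
        | exact dist_triangle _ _ _
        | (rename_i x y; linarith [dist_nonneg (x := x) (y := y), hd x y])
  eq_of_dist_eq_zero {p q} h := by
    cases p <;> cases q <;> simp_all [optDist]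

/-- Diameter is controlled by diameter plus twice the Hausdorff distance. -/
theorem diam_le_diam_add_two_hausdorffDist {E : Type*} [MetricSpace E] {s t : Set E}
    (hsc : IsCompact s) (hsne : s.Nonempty)
    (hfin : EMetric.hausdorffEdist s t ≠ ⊤) :
    Metric.diam t ≤ Metric.diam s + 2 * Metric.hausdorffDist s t := by
  refine Metric.diam_le_of_forall_dist_le
    (by have := Metric.hausdorffDist_nonneg (s := s) (t := t)
        have := Metric.diam_nonneg (s := s); linarith) (fun y1 hy1 y2 hy2 => ?_)
  obtain ⟨x1, hx1, hx1e⟩ := hsc.exists_infDist_eq_dist hsne y1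
  obtain ⟨x2, hx2, hx2e⟩ := hsc.exists_infDist_eq_dist hsne y2
  have h1 : dist y1 x1 ≤ Metric.hausdorffDist s t := by
    rw [← hx1e]
    have := Metric.infDist_le_hausdorffDist_of_mem hy1
      (by have h : Metric.hausdorffEDist s t ≠ ⊤ := hfin; rwa [Metric.hausdorffEDist_comm] at h)
    rwa [Metric.hausdorffDist_comm] at this
  have h2 : dist y2 x2 ≤ Metric.hausdorffDist s t := by
    rw [← hx2e]
    have := Metric.infDist_le_hausdorffDist_of_mem hy2
      (by have h : Metric.hausdorffEDist s t ≠ ⊤ := hfin; rwa [Metric.hausdorffEDist_comm] at h)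
    rwa [Metric.hausdorffDist_comm] at this
  have h3 : dist x1 x2 ≤ Metric.diam s := Metric.dist_le_diam_of_mem hsc.isBounded hx1 hx2
  calc dist y1 y2 ≤ dist y1 x1 + dist x1 x2 + dist x2 y2 := dist_triangle4 _ _ _ _
    _ ≤ Metric.hausdorffDist s t + Metric.diam s + Metric.hausdorffDist s t := by
        rw [dist_comm x2 y2]; linarith
    _ = Metric.diam s + 2 * Metric.hausdorffDist s t := by ring

/-- Lower bound: `ghDist` is at least half the diameter difference. -/
theorem diam_le_of_ghDist {A B : Type} [MetricSpace A] [Nonempty A] [CompactSpace A]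
    [MetricSpace B] [Nonempty B] [CompactSpace B] :
    Metric.diam (univ : Set B) ≤ Metric.diam (univ : Set A)
      + 2 * GromovHausdorff.ghDist A B := by
  obtain ⟨Φ, Ψ, hΦ, hΨ, hEq⟩ := GromovHausdorff.ghDist_eq_hausdorffDist A B
  have hsc : IsCompact (range Φ) := by
    rw [← image_univ]; exact isCompact_univ.image hΦ.continuous
  have htc : IsCompact (range Ψ) := by
    rw [← image_univ]; exact isCompact_univ.image hΨ.continuous
  have hfin : EMetric.hausdorffEdist (range Φ) (range Ψ) ≠ ⊤ :=
    Metric.hausdorffEdist_ne_top_of_nonempty_of_bounded (range_nonempty _) (range_nonempty _)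
      hsc.isBounded htc.isBounded
  have := diam_le_diam_add_two_hausdorffDist hsc (range_nonempty Φ) hfin
  rwa [hΦ.diam_range, hΨ.diam_range, ← hEq] at this

theorem ghDist_extremely_fragile {Z : Type} [MetricSpace Z] [Fintype Z] [Nonempty Z]
    (X : Type) [MetricSpace X] [Fintype X] [Nonempty X] (N : ℝ) (hN : 0 < N) :
    ∃ (X' : Type) (_ : MetricSpace X') (fX' : Fintype X') (_ : Nonempty X')
      (ι : X → X'), Isometry ι ∧ fX'.card = Fintype.card X + 1 ∧
      N < |GromovHausdorff.ghDist Z X' - GromovHausdorff.ghDist Z X| := by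
  have hgh0 : (0:ℝ) ≤ GromovHausdorff.ghDist Z X := dist_nonneg
  set a : ℝ := Metric.diam (univ : Set Z) + 2 * GromovHausdorff.ghDist Z X + 2 * N
      + Metric.diam (univ : Set X) + 1 with ha_def
  have hdZ : (0:ℝ) ≤ Metric.diam (univ : Set Z) := Metric.diam_nonneg
  have hdX : (0:ℝ) ≤ Metric.diam (univ : Set X) := Metric.diam_nonneg
  have ha : 0 < a := by rw [ha_def]; linarith
  have hd : ∀ x y : X, dist x y ≤ 2 * a := by
    intro x y
    have : dist x y ≤ Metric.diam (univ : Set X) :=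
      Metric.dist_le_diam_of_mem isBounded_of_compactSpace (mem_univ _) (mem_univ _)
    rw [ha_def]; linarith
  letI M : MetricSpace (Option X) := optMetric X a ha hd
  refine ⟨Option X, M, inferInstance, inferInstance, some, ?_, ?_, ?_⟩
  · exact Isometry.of_dist_eq fun x y => rfl
  · simp
  · have hdiam : a ≤ Metric.diam (univ : Set (Option X)) := by
      have : dist (none : Option X) (some (Classical.arbitrary X)) = a := rfl
      rw [← this]
      exact Metric.dist_le_diam_of_mem isBounded_of_compactSpace (mem_univ _) (mem_univ _)
    have key := diam_le_of_ghDist (A := Z) (B := Option X)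
    have : N < GromovHausdorff.ghDist Z (Option X) - GromovHausdorff.ghDist Z X := by
      rw [ha_def] at hdiam; linarith
    exact lt_of_lt_of_le this (le_abs_self _)
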